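/- arXiv:1606.07881 — 7 statements merged into one kernel-verified Lean document; each statement's English description precedes it below -/
import Mathlib

section
/- Let G₁ and G₂ be finite simple graphs with G₁ nonempty, such that G₁ ⟶ G₂ but not G₂ ⟶ G₁, and such that it is not the case that G₁ has no edges and G₂ is 2-colorable (i.e. the pair (G₁,G₂) is not homomorphism-equivalent to the gap (K₁,K₂)). Then there exists a finite simple graph H with G₁ ⟶ H, H ⟶ G₂, not H ⟶ G₁, and not G₂ ⟶ H. (Density of the homomorphism order.) -/
open SimpleGraph

set_option maxHeartbeats 1000000

/-! ### Auxiliary constructions -/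

/-- Tensor (categorical) product of two simple graphs. -/
def Tensor {α β : Type} (G : SimpleGraph α) (H : SimpleGraph β) : SimpleGraph (α × β) where
  Adj p q := G.Adj p.1 q.1 ∧ H.Adj p.2 q.2
  symm := ⟨fun p q h => ⟨h.1.symm, h.2.symm⟩⟩
  loopless := ⟨fun p h => G.loopless.irrefl p.1 h.1⟩

/-- Shift relation on tuples: `b` is the left shift of `a`. -/
def ShRel (k n : ℕ) (a b : Fin k → Fin n) : Prop :=
  ∀ (i : ℕ) (h : i + 1 < k), b ⟨i, by omega⟩ = a ⟨i + 1, h⟩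

/-- Vertices of the shift graph: strictly increasing `k`-tuples from `Fin n`. -/
abbrev ShVert (k n : ℕ) := {f : Fin k → Fin n // StrictMono f}

/-- The shift graph. -/
def Sh (k n : ℕ) : SimpleGraph (ShVert k n) where
  Adj a b := a ≠ b ∧ (ShRel k n a.1 b.1 ∨ ShRel k n b.1 a.1)
  symm := ⟨fun a b h => ⟨h.1.symm, h.2.symm⟩⟩
  loopless := ⟨fun a h => h.1 rfl⟩

/-- Sliding-window invariant along walks in the shift graph. -/
lemma sh_walk {k n : ℕ} {a b : ShVert k n} (w : (Sh k n).Walk a b) :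
    ∃ d : ℤ, d.natAbs ≤ w.length ∧ (d + w.length) % 2 = 0 ∧
      ∀ (i j : ℕ) (hi : i < k) (hj : j < k), (i : ℤ) - j = d →
        w.length ≤ i → i + w.length + 1 ≤ k → a.1 ⟨i, hi⟩ = b.1 ⟨j, hj⟩ := by
  induction w with
  | nil =>
      refine ⟨0, by simp, by simp, fun i j hi hj hd _ _ => ?_⟩
      have : i = j := by omega
      subst this; rfl
  | @cons x y z h p ih =>
      obtain ⟨d', h1, h2, h3⟩ := ih
      rcases h.2 with hrel | hrel
      · refine ⟨d' + 1, by simp [Walk.length_cons]; omega,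
          by simp [Walk.length_cons]; omega, ?_⟩
        intro i j hi hj hd hli hui
        simp only [Walk.length_cons] at hli hui
        obtain ⟨i', rfl⟩ : ∃ i', i = i' + 1 := ⟨i - 1, by omega⟩
        have e1 : y.1 ⟨i', by omega⟩ = x.1 ⟨i' + 1, hi⟩ := hrel i' (by omega)
        have e3 := h3 i' j (by omega) hj (by omega) (by omega) (by omega)
        rw [← e1, e3]
      · refine ⟨d' - 1, by simp [Walk.length_cons]; omega,
          by simp [Walk.length_cons]; omega, ?_⟩
        intro i j hi hj hd hli hui
        simp only [Walk.length_cons] at hli hui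
        have e1 : x.1 ⟨i, hi⟩ = y.1 ⟨i + 1, by omega⟩ := hrel i (by omega)
        have e3 := h3 (i + 1) j (by omega) hj (by omega) (by omega) (by omega)
        rw [e1, e3]

/-- No short odd closed walks in the shift graph. -/
lemma sh_no_short_odd_closed_walk {k n : ℕ} {a : ShVert k n} (w : (Sh k n).Walk a a)
    (hodd : Odd w.length) (hlen : 2 * w.length + 1 ≤ k) : False := by
  obtain ⟨d, h1, h2, h3⟩ := sh_walk w
  obtain ⟨m, hm⟩ := hodd
  have hd : d ≠ 0 := by omega
  have hji : ((w.length : ℤ) - d) = (((w.length : ℤ) - d).toNat : ℤ) := by omega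
  have := h3 w.length ((w.length : ℤ) - d).toNat (by omega) (by omega) (by omega) le_rfl
    (by omega)
  have heq := a.2.injective this
  have : w.length = ((w.length : ℤ) - d).toNat := congrArg Fin.val heq
  omega

/-- The shift graph on `1`-tuples is complete: not `c`-colorable when `n = c+1`. -/
lemma sh_one_not_colorable (c : ℕ) : ¬ (Sh 1 (c + 1)).Colorable c := by
  rintro ⟨C⟩
  have mono : ∀ x : Fin (c + 1), StrictMono (fun _ : Fin 1 => x) := by
    intro x i j hij
    exact absurd hij (by rw [Subsingleton.elim i j]; exact lt_irrefl _)
  have inj : Function.Injective (fun x : Fin (c + 1) => C ⟨fun _ => x, mono x⟩) := by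
    intro x y hxy
    by_contra hne
    refine C.valid ⟨?_, Or.inl (fun i h => absurd h (by omega))⟩ hxy
    intro hv
    exact hne (congrFun (congrArg Subtype.val hv) 0)
  simpa using Fintype.card_le_of_injective _ inj

/-- Coloring step: a `c`-coloring of `Sh (k+1) n` yields a `2^c`-coloring of `Sh k n`. -/
lemma sh_step {k n c : ℕ} (hk : 1 ≤ k) (h : (Sh (k + 1) n).Colorable c) :
    (Sh k n).Colorable (2 ^ c) := by
  classical
  obtain ⟨C⟩ := h
  set D : ShVert k n → Finset (Fin c) :=
    fun a => (Finset.univ.filter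
      (fun b : ShVert (k + 1) n => ∀ i : Fin k, b.1 i.castSucc = a.1 i)).image C with hD
  have key : ∀ a a' : ShVert k n, ShRel k n a.1 a'.1 →
      a.1 ⟨k - 1, by omega⟩ < a'.1 ⟨k - 1, by omega⟩ → D a ≠ D a' := by
    intro a a' hrel hlast heq
    set tf : Fin (k + 1) → Fin n := Fin.snoc a.1 (a'.1 ⟨k - 1, by omega⟩) with htf
    have tmono : StrictMono tf := by
      rw [Fin.strictMono_iff_lt_succ]
      intro i
      rcases Nat.lt_or_ge (i.1 + 1) k with hik | hik
      · have hsucc : i.succ = Fin.castSucc ⟨i.1 + 1, hik⟩ := Fin.ext rfl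
        rw [htf, hsucc, Fin.snoc_castSucc, Fin.snoc_castSucc]
        exact a.2 (show i < ⟨i.1 + 1, hik⟩ from Fin.mk_lt_mk.mpr (by omega))
      · have hik' : i.1 + 1 = k := by omega
        have hsucc : i.succ = Fin.last k := by
          apply Fin.ext
          show i.1 + 1 = k
          omega
        have hcast : i = (⟨k - 1, by omega⟩ : Fin k) := by
          apply Fin.ext
          show i.1 = k - 1
          omega
        rw [htf, hsucc, Fin.snoc_last, Fin.snoc_castSucc, hcast]
        exact hlast
    set tv : ShVert (k + 1) n := ⟨tf, tmono⟩ with htv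
    have htv_mem : C tv ∈ D a := by
      rw [hD]
      refine Finset.mem_image.mpr ⟨tv, Finset.mem_filter.mpr ⟨Finset.mem_univ _, ?_⟩, rfl⟩
      intro i
      show tf i.castSucc = a.1 i
      rw [htf, Fin.snoc_castSucc]
    rw [heq] at htv_mem
    obtain ⟨u, hu_mem, hu_eq⟩ := Finset.mem_image.mp htv_mem
    have hu_pref : ∀ i : Fin k, u.1 i.castSucc = a'.1 i := (Finset.mem_filter.mp hu_mem).2
    have hrelTU : ShRel (k + 1) n tv.1 u.1 := by
      intro i hik1
      have hik : i < k := by omega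
      have e1 : (⟨i, by omega⟩ : Fin (k + 1)) = Fin.castSucc ⟨i, hik⟩ := Fin.ext rfl
      rw [e1, hu_pref ⟨i, hik⟩]
      rcases Nat.lt_or_ge (i + 1) k with hik' | hik'
      · have e2 : (⟨i + 1, hik1⟩ : Fin (k + 1)) = Fin.castSucc ⟨i + 1, hik'⟩ := Fin.ext rfl
        show a'.1 ⟨i, hik⟩ = tf ⟨i + 1, hik1⟩
        rw [e2, htf, Fin.snoc_castSucc]
        exact hrel i hik'
      · have hik'' : i + 1 = k := by omega
        have e2 : (⟨i + 1, hik1⟩ : Fin (k + 1)) = Fin.last k := by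
          apply Fin.ext
          show i + 1 = k
          omega
        show a'.1 ⟨i, hik⟩ = tf ⟨i + 1, hik1⟩
        have e3 : (⟨i, hik⟩ : Fin k) = ⟨k - 1, by omega⟩ := by
          apply Fin.ext
          show i = k - 1
          omega
        rw [e2, htf, Fin.snoc_last, e3]
    have hne : tv ≠ u := by
      intro hequ
      have heq2 := hrelTU 0 (by omega)
      rw [← hequ] at heq2
      have heq3 : tf ⟨0, by omega⟩ = tf ⟨1, by omega⟩ := heq2
      exact absurd heq3 (ne_of_lt (tmono (Fin.mk_lt_mk.mpr Nat.zero_lt_one)))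
    exact C.valid ⟨hne, Or.inl hrelTU⟩ (hu_eq.trans rfl).symm
  have main : ∀ a a' : ShVert k n, ShRel k n a.1 a'.1 → a ≠ a' → D a ≠ D a' := by
    intro a a' hrel hne
    rcases Nat.lt_or_ge 1 k with hk2 | hk1
    · -- k ≥ 2
      have hlast : a.1 ⟨k - 1, by omega⟩ < a'.1 ⟨k - 1, by omega⟩ := by
        have e1 : a'.1 ⟨k - 2, by omega⟩ = a.1 ⟨k - 2 + 1, by omega⟩ := hrel (k - 2) (by omega)
        have e2 : (⟨k - 2 + 1, by omega⟩ : Fin k) = ⟨k - 1, by omega⟩ := by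
          apply Fin.ext
          show k - 2 + 1 = k - 1
          omega
        have e3 : a'.1 ⟨k - 2, by omega⟩ < a'.1 ⟨k - 1, by omega⟩ :=
          a'.2 (Fin.mk_lt_mk.mpr (by omega))
        rw [e1, e2] at e3
        exact e3
      exact key a a' hrel hlast
    · -- k = 1
      have hkeq : k = 1 := by omega
      have hvac : ∀ (x y : ShVert k n), ShRel k n x.1 y.1 :=
        fun x y i hik => absurd hik (by omega)
      rcases lt_trichotomy (a.1 ⟨k - 1, by omega⟩) (a'.1 ⟨k - 1, by omega⟩) with hlt | heq | hgt
      · exact key a a' (hvac a a') hlt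
      · exfalso
        apply hne
        apply Subtype.ext
        funext i
        have : i = (⟨k - 1, by omega⟩ : Fin k) := Fin.ext (by omega)
        rw [this]; exact heq
      · exact (key a' a (hvac a' a) hgt).symm
  have proper : ∀ {a a' : ShVert k n}, (Sh k n).Adj a a' → D a ≠ D a' := by
    intro a a' hadj
    obtain ⟨hne, hrel | hrel⟩ := hadj
    · exact main a a' hrel hne
    · exact (main a' a hrel hne.symm).symm
  have col : (Sh k n).Coloring (Finset (Fin c)) := Coloring.mk D proper
  have := col.colorable
  rwa [Fintype.card_finset, Fintype.card_fin] at this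

/-- Shift graphs of unbounded chromatic number. -/
lemma sh_not_colorable : ∀ k c : ℕ, ∃ n, ¬ (Sh (k + 1) n).Colorable c := by
  intro k
  induction k with
  | zero => exact fun c => ⟨c + 1, sh_one_not_colorable c⟩
  | succ k ih =>
      intro c
      obtain ⟨n, hn⟩ := ih (2 ^ c)
      exact ⟨n, fun h => hn (sh_step (by omega) h)⟩

/-- A finite graph with no short odd closed walk is 2-colorable. -/
lemma colorable_two_of_no_short_odd {α : Type} [Fintype α] (G : SimpleGraph α)
    (h : ∀ (v : α) (w : G.Walk v v), Odd w.length → 2 * Fintype.card α ≤ w.length) :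
    G.Colorable 2 := by
  classical
  set rep : α → α := fun v => (G.connectedComponentMk v).out with hrep
  have hreach : ∀ v, G.Reachable (rep v) v := by
    intro v
    exact SimpleGraph.ConnectedComponent.exact (Quot.out_eq (G.connectedComponentMk v))
  have hdistlt : ∀ u v, G.Reachable u v → G.dist u v < Fintype.card α := by
    intro u v hr
    obtain ⟨r⟩ := hr
    calc G.dist u v ≤ (r.toPath : G.Walk u v).length := dist_le _
      _ < Fintype.card α := r.toPath.2.length_lt
  set col : α → Fin 2 := fun v => ⟨G.dist (rep v) v % 2, by omega⟩ with hcol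
  refine ⟨Coloring.mk col ?_⟩
  intro u v hadj hceq
  have hrr : rep u = rep v :=
    congrArg Quot.out (SimpleGraph.ConnectedComponent.connectedComponentMk_eq_of_adj hadj)
  obtain ⟨p, hp⟩ := (hreach u).exists_walk_length_eq_dist
  have hrv : G.Reachable (rep u) v := hrr ▸ hreach v
  obtain ⟨q, hq⟩ := hrv.exists_walk_length_eq_dist
  set w : G.Walk (rep u) (rep u) := p.append (Walk.cons hadj q.reverse) with hw
  have hlenw : w.length = p.length + (q.length + 1) := by
    rw [hw, Walk.length_append, Walk.length_cons, Walk.length_reverse]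
  have hparity : G.dist (rep u) u % 2 = G.dist (rep u) v % 2 := by
    have := congrArg Fin.val hceq
    simp only [hcol] at this
    rw [← hrr] at this
    exact this
  have hodd : Odd w.length := by
    rw [Nat.odd_iff, hlenw, hp, hq]
    omega
  have hbig := h (rep u) w hodd
  have hd1 := hdistlt (rep u) u (hreach u)
  have hd2 := hdistlt (rep u) v hrv
  rw [hlenw, hp, hq] at hbig
  omega

/-- Density of the homomorphism order: every non-gap interval contains an
intermediate graph. -/
theorem hom_order_dense {V₁ V₂ : Type} [Fintype V₁] [Fintype V₂] [Nonempty V₁]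
    (G₁ : SimpleGraph V₁) (G₂ : SimpleGraph V₂)
    (h₁₂ : Nonempty (G₁ →g G₂)) (h₂₁ : ¬ Nonempty (G₂ →g G₁))
    (hgap : ¬ (G₁.edgeSet = ∅ ∧ G₂.Colorable 2)) :
    ∃ (W : Type) (_ : Fintype W) (H : SimpleGraph W),
      Nonempty (G₁ →g H) ∧ Nonempty (H →g G₂) ∧
      ¬ Nonempty (H →g G₁) ∧ ¬ Nonempty (G₂ →g H) := by
  classical
  obtain ⟨f₁₂⟩ := h₁₂
  by_cases hE : G₁.edgeSet = ∅
  · -- `G₁` is edgeless; take `H = K₂`.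
    have hcol : ¬ G₂.Colorable 2 := fun hc => hgap ⟨hE, hc⟩
    have hG₂e : ∃ a b, G₂.Adj a b := by
      by_contra hno
      push_neg at hno
      exact hcol ⟨⟨fun _ => 0, fun {a b} hab => absurd hab (hno a b)⟩⟩
    obtain ⟨a, b, hab⟩ := hG₂e
    have hG₁no : ∀ u v, ¬ G₁.Adj u v := by
      intro u v huv
      exact absurd (G₁.mem_edgeSet.mpr huv) (by simp [hE])
    refine ⟨Bool, inferInstance, ⊤, ⟨⟨fun _ => true, ?_⟩⟩,
      ⟨⟨fun x => if x then a else b, ?_⟩⟩, ?_, ?_⟩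
    · intro u v huv
      exact absurd huv (hG₁no u v)
    · intro x y hxy
      have hne : x ≠ y := hxy.ne
      cases x <;> cases y <;> simp only [if_true, if_false, Bool.true_eq_false,
        Bool.false_eq_true] at *
      · exact absurd rfl hne
      · exact hab.symm
      · exact hab
      · exact absurd rfl hne
    · rintro ⟨g⟩
      exact hG₁no _ _ (g.map_rel (show (⊤ : SimpleGraph Bool).Adj true false by simp))
    · rintro ⟨g⟩
      have : G₂.Colorable (Fintype.card Bool) := SimpleGraph.Coloring.colorable g
      exact hcol (by simpa using this)
  · -- main case: `G₁` has an edge.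
    obtain ⟨e, he⟩ := Set.nonempty_iff_ne_empty.mpr hE
    obtain ⟨u₀, u₁, h01⟩ : ∃ u v, G₁.Adj u v := by
      induction e using Sym2.ind with
      | _ x y => exact ⟨x, y, G₁.mem_edgeSet.mp he⟩
    set N := Fintype.card V₂ with hN
    set M := Fintype.card (V₂ → V₁) with hM
    obtain ⟨n, hX⟩ := sh_not_colorable (4 * N + 1) M
    set X : SimpleGraph (ShVert (4 * N + 2) n) := Sh (4 * N + 2) n with hXdef
    haveI : Fintype (ShVert (4 * N + 2) n) := Fintype.ofFinite _
    have hXne : Nonempty (ShVert (4 * N + 2) n) := by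
      by_contra hempty
      haveI : IsEmpty (ShVert (4 * N + 2) n) := not_nonempty_iff.mp hempty
      exact hX (Colorable.of_isEmpty M)
    obtain ⟨x₀⟩ := hXne
    set H : SimpleGraph (V₁ ⊕ (V₂ × ShVert (4 * N + 2) n)) := G₁.sum (Tensor G₂ X) with hH
    refine ⟨V₁ ⊕ (V₂ × ShVert (4 * N + 2) n), inferInstance, H, ⟨⟨Sum.inl, ?_⟩⟩,
      ⟨⟨Sum.elim f₁₂ Prod.fst, ?_⟩⟩, ?_, ?_⟩
    · -- G₁ → H
      intro u v huv
      exact huv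
    · -- H → G₂
      rintro (u | p) (v | q) hadj
      · exact f₁₂.map_rel hadj
      · exact absurd hadj (by simp [hH])
      · exact absurd hadj (by simp [hH])
      · exact hadj.1
    · -- ¬ (H → G₁)
      rintro ⟨g⟩
      have valid : ∀ {x y : ShVert (4 * N + 2) n}, X.Adj x y →
          (fun v => g (Sum.inr (v, x))) ≠ (fun v => g (Sum.inr (v, y))) := by
        intro x y hxy heq
        refine h₂₁ ⟨⟨fun v => g (Sum.inr (v, x)), ?_⟩⟩
        intro u v huv
        have hadj : H.Adj (Sum.inr (u, x)) (Sum.inr (v, y)) := ⟨huv, hxy⟩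
        have hg := g.map_rel hadj
        have hyx : g (Sum.inr (v, y)) = g (Sum.inr (v, x)) := (congrFun heq v).symm
        rwa [hyx] at hg
      exact hX ((Coloring.mk (fun x => fun v => g (Sum.inr (v, x))) valid).colorable)
    · -- ¬ (G₂ → H)
      rintro ⟨f⟩
      set T : Set V₂ := {v | ∀ a, f v ≠ Sum.inl a} with hT
      have hTmem : ∀ v : T, ∃ p, f v.1 = Sum.inr p := by
        intro v
        cases hfv : f v.1 with
        | inl a => exact absurd hfv (v.2 a)
        | inr p => exact ⟨p, rfl⟩
      haveI : Fintype T := Fintype.ofFinite _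
      have hcardT : Fintype.card T ≤ N := by
        rw [hN]
        exact Fintype.card_le_of_injective Subtype.val Subtype.val_injective
      have φ : (G₂.induce T) →g X := by
        refine ⟨fun v => Sum.elim (fun _ => x₀) Prod.snd (f v.1), ?_⟩
        intro u v huv
        have hadj : H.Adj (f u.1) (f v.1) := f.map_rel huv
        obtain ⟨pu, hpu⟩ := hTmem u
        obtain ⟨pv, hpv⟩ := hTmem v
        rw [hpu, hpv] at hadj ⊢
        exact hadj.2
      have hbip : (G₂.induce T).Colorable 2 := by
        apply colorable_two_of_no_short_odd
        intro v w hodd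
        by_contra hlt
        push_neg at hlt
        refine sh_no_short_odd_closed_walk (w.map φ) ?_ ?_
        · rwa [Walk.length_map]
        · rw [Walk.length_map]; omega
      obtain ⟨c⟩ := hbip
      refine h₂₁ ⟨⟨fun v => if h : ∃ a, f v = Sum.inl a then h.choose
        else (if c ⟨v, fun a ha => h ⟨a, ha⟩⟩ = 0 then u₀ else u₁), ?_⟩⟩
      intro v w hvw
      have hadj : H.Adj (f v) (f w) := f.map_rel hvw
      by_cases hv : ∃ a, f v = Sum.inl a <;> by_cases hw : ∃ a, f w = Sum.inl a
      · rw [dif_pos hv, dif_pos hw]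
        rw [hv.choose_spec, hw.choose_spec] at hadj
        exact hadj
      · exfalso
        obtain ⟨pw, hpw⟩ := hTmem ⟨w, fun a ha => hw ⟨a, ha⟩⟩
        rw [hv.choose_spec, hpw] at hadj
        simp [hH] at hadj
      · exfalso
        obtain ⟨pv, hpv⟩ := hTmem ⟨v, fun a ha => hv ⟨a, ha⟩⟩
        rw [hw.choose_spec, hpv] at hadj
        simp [hH] at hadj
      · rw [dif_neg hv, dif_neg hw]
        have hind : (G₂.induce T).Adj ⟨v, fun a ha => hv ⟨a, ha⟩⟩ ⟨w, fun a ha => hw ⟨a, ha⟩⟩ := by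
          simpa using hvw
        have hne := c.valid hind
        set cv := c ⟨v, fun a ha => hv ⟨a, ha⟩⟩ with hcv
        set cw := c ⟨w, fun a ha => hw ⟨a, ha⟩⟩ with hcw
        have hvne : cv.val ≠ cw.val := fun hval => hne (Fin.ext hval)
        have hv2 : cv.val < 2 := cv.isLt
        have hw2 : cw.val < 2 := cw.isLt
        by_cases hcv0 : cv = 0
        · have hcw0 : ¬ cw = 0 := fun h0 => hne (hcv0.trans h0.symm)
          rw [if_pos hcv0, if_neg hcw0]
          exact h01
        · have hcw0 : cw = 0 := by
            apply Fin.ext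
            have : cv.val ≠ 0 := fun h0 => hcv0 (Fin.ext h0)
            omega
          rw [if_neg hcv0, if_pos hcw0]
          exact h01.symm
end

section
/- For every countable partial order (Q, ≤) there exists a map F : Q → Finset ℕ such that every element of every F(q) is an odd integer greater than 1, and for all p, q ∈ Q one has p ≤ q if and only if for every a ∈ F(p) there exists b ∈ F(q) with b ∣ a. (The order (𝒫, ≤_𝒫) of finite sets of odd integers, where A ≤_𝒫 B iff every a ∈ A is divisible by some b ∈ B, is a universal partial order.) -/
/-- the `k`-th odd prime -/
noncomputable def oddPrimeSeq (k : ℕ) : ℕ := Nat.nth Nat.Prime (k + 1)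

lemma oddPrimeSeq_prime (k : ℕ) : Nat.Prime (oddPrimeSeq k) :=
  Nat.prime_nth_prime (k + 1)

lemma two_lt_oddPrimeSeq (k : ℕ) : 2 < oddPrimeSeq k := by
  have h := (Nat.nth_strictMono Nat.infinite_setOf_prime) (Nat.succ_pos k)
  rwa [Nat.nth_prime_zero_eq_two] at h

lemma oddPrimeSeq_inj : Function.Injective oddPrimeSeq := by
  intro a b h
  have := Nat.nth_injective Nat.infinite_setOf_prime h
  omega

open Classical in
/-- recursive construction: `auxN rel k = π k * ∏_{j < k, rel k j} auxN rel j` -/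
noncomputable def auxN (rel : ℕ → ℕ → Prop) (k : ℕ) : ℕ :=
  oddPrimeSeq k *
    ∏ j ∈ (Finset.range k).attach.filter (fun j => rel k j.1), auxN rel j.1
termination_by k
decreasing_by exact Finset.mem_range.mp j.2

open Classical in
lemma auxN_def (rel : ℕ → ℕ → Prop) (k : ℕ) :
    auxN rel k = oddPrimeSeq k *
      ∏ j ∈ (Finset.range k).attach.filter (fun j => rel k j.1), auxN rel j.1 := by
  rw [auxN]

lemma auxN_odd_gt_one (rel : ℕ → ℕ → Prop) (k : ℕ) :
    Odd (auxN rel k) ∧ 1 < auxN rel k := by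
  induction k using Nat.strong_induction_on with
  | _ k ih =>
    classical
    rw [auxN_def]
    have hπodd : Odd (oddPrimeSeq k) :=
      (oddPrimeSeq_prime k).odd_of_ne_two (by have := two_lt_oddPrimeSeq k; omega)
    have hprod : Odd (∏ j ∈ (Finset.range k).attach.filter (fun j => rel k j.1),
        auxN rel j.1) := by
      refine Finset.prod_induction _ Odd (fun a b ha hb => ha.mul hb) odd_one ?_
      intro j hj
      exact (ih j.1 (Finset.mem_range.mp j.2)).1
    constructor
    · exact hπodd.mul hprod
    · have h1 : 1 ≤ ∏ j ∈ (Finset.range k).attach.filter (fun j => rel k j.1),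
          auxN rel j.1 := hprod.pos
      have h2 : 2 < oddPrimeSeq k := two_lt_oddPrimeSeq k
      calc 1 < oddPrimeSeq k := by omega
        _ = oddPrimeSeq k * 1 := (mul_one _).symm
        _ ≤ _ := Nat.mul_le_mul_left _ h1

lemma oddPrimeSeq_dvd_auxN (rel : ℕ → ℕ → Prop) (k : ℕ) :
    oddPrimeSeq k ∣ auxN rel k := by
  rw [auxN_def]; exact Dvd.intro _ rfl

lemma auxN_dvd_of_rel (rel : ℕ → ℕ → Prop) {j k : ℕ} (hjk : j < k) (hrel : rel k j) :
    auxN rel j ∣ auxN rel k := by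
  classical
  rw [auxN_def rel k]
  refine dvd_mul_of_dvd_right ?_ _
  exact Finset.dvd_prod_of_mem _
    (Finset.mem_filter.mpr ⟨Finset.mem_attach _ ⟨j, Finset.mem_range.mpr hjk⟩, hrel⟩)

lemma auxN_key (rel : ℕ → ℕ → Prop)
    (htrans : ∀ a b c, rel a b → rel b c → rel a c) :
    ∀ k j : ℕ, oddPrimeSeq j ∣ auxN rel k → j = k ∨ rel k j := by
  intro k
  induction k using Nat.strong_induction_on with
  | _ k ih =>
    classical
    intro j hdvd
    rw [auxN_def] at hdvd
    have hp : Nat.Prime (oddPrimeSeq j) := oddPrimeSeq_prime j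
    rcases (Nat.Prime.dvd_mul hp).mp hdvd with h | h
    · left
      exact oddPrimeSeq_inj ((Nat.prime_dvd_prime_iff_eq hp (oddPrimeSeq_prime k)).mp h)
    · obtain ⟨i, hi, hdvd'⟩ := hp.prime.exists_mem_finset_dvd h
      obtain ⟨hmem, hrel⟩ := Finset.mem_filter.mp hi
      have hik : i.1 < k := Finset.mem_range.mp i.2
      rcases ih i.1 hik j hdvd' with rfl | h'
      · right; exact hrel
      · right; exact htrans k i.1 j hrel h'

/-- The order 𝒫 of finite sets of odd integers > 1, with A ≤ B iff every
element of A is divisible by some element of B, is a universal partial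
order for countable partial orders. -/
theorem odd_divisibility_sets_universal (Q : Type*) [Countable Q] [PartialOrder Q] :
    ∃ F : Q → Finset ℕ,
      (∀ q : Q, ∀ a ∈ F q, Odd a ∧ 1 < a) ∧
      (∀ p q : Q, p ≤ q ↔ ∀ a ∈ F p, ∃ b ∈ F q, b ∣ a) := by
  classical
  obtain ⟨e, he⟩ := exists_injective_nat Q
  set rel : ℕ → ℕ → Prop := fun k j => ∃ q r : Q, e q = k ∧ e r = j ∧ q ≤ r with hrel
  have htrans : ∀ a b c, rel a b → rel b c → rel a c := by
    rintro a b c ⟨q, r, rfl, rfl, hqr⟩ ⟨r', s, hr', rfl, hrs⟩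
    exact ⟨q, s, rfl, rfl, hqr.trans (he hr' ▸ hrs)⟩
  refine ⟨fun q => (Finset.range (e q + 1)).filter
      (fun j => ∃ r : Q, e r = j ∧ r ≤ q) |>.image (auxN rel), ?_, ?_⟩
  · intro q a ha
    obtain ⟨j, _, rfl⟩ := Finset.mem_image.mp ha
    exact auxN_odd_gt_one rel j
  · intro p q
    constructor
    · -- forward
      intro hpq a ha
      obtain ⟨j, hj, rfl⟩ := Finset.mem_image.mp ha
      obtain ⟨hjlt, r, rfl, hrp⟩ := Finset.mem_filter.mp hj
      have hrq : r ≤ q := hrp.trans hpq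
      by_cases hle : e r ≤ e q
      · exact ⟨auxN rel (e r), Finset.mem_image.mpr ⟨e r,
          Finset.mem_filter.mpr ⟨Finset.mem_range.mpr (by omega), r, rfl, hrq⟩, rfl⟩,
          dvd_rfl⟩
      · refine ⟨auxN rel (e q), Finset.mem_image.mpr ⟨e q,
          Finset.mem_filter.mpr ⟨Finset.mem_range.mpr (by omega), q, rfl, le_refl q⟩, rfl⟩, ?_⟩
        exact auxN_dvd_of_rel rel (by omega) ⟨r, q, rfl, rfl, hrq⟩
    · -- backward
      intro h
      obtain ⟨b, hb, hdvd⟩ := h (auxN rel (e p)) (Finset.mem_image.mpr ⟨e p,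
        Finset.mem_filter.mpr ⟨Finset.mem_range.mpr (by omega), p, rfl, le_refl p⟩, rfl⟩)
      obtain ⟨j, hj, rfl⟩ := Finset.mem_image.mp hb
      obtain ⟨hjlt, r, rfl, hrq⟩ := Finset.mem_filter.mp hj
      have hπ : oddPrimeSeq (e r) ∣ auxN rel (e p) :=
        (oddPrimeSeq_dvd_auxN rel (e r)).trans hdvd
      rcases auxN_key rel htrans (e p) (e r) hπ with heq | ⟨q', r', hq', hr', hle⟩
      · exact (he heq) ▸ hrq
      · exact (he hq' ▸ he hr' ▸ hle : p ≤ r).trans hrq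
end

section
/- Let (Q, ≤) be a countable partial order in which every down-set x↓ = {y : y ≤ x} is finite (Q is past-finite). Then there exists an injective map Φ : Q → Finset ℕ such that for all x, y ∈ Q one has x ≤ y if and only if Φ(x) ⊆ Φ(y). (The order of finite subsets of a countably infinite set under inclusion is past-finite-universal.) -/
/-- The order of finite subsets of ℕ under inclusion is past-finite-universal:
every countable partial order with all down-sets finite embeds into it. -/
theorem finset_order_past_finite_universal (Q : Type*) [Countable Q] [PartialOrder Q]
    (hpf : ∀ x : Q, {y : Q | y ≤ x}.Finite) :
    ∃ Φ : Q → Finset ℕ, Function.Injective Φ ∧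
      ∀ x y : Q, x ≤ y ↔ Φ x ⊆ Φ y := by
  obtain ⟨f, hf⟩ := Countable.exists_injective_nat Q
  refine ⟨fun x => (hpf x).toFinset.image f, ?_, ?_⟩
  · intro x y hxy
    have key : ∀ a b : Q, (hpf a).toFinset.image f ⊆ (hpf b).toFinset.image f → a ≤ b := by
      intro a b h
      have : f a ∈ (hpf b).toFinset.image f := by
        apply h
        simp only [Finset.mem_image, Set.Finite.mem_toFinset, Set.mem_setOf_eq]
        exact ⟨a, le_refl a, rfl⟩
      simp only [Finset.mem_image, Set.Finite.mem_toFinset, Set.mem_setOf_eq] at this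
      obtain ⟨z, hz, hfz⟩ := this
      exact hf hfz ▸ hz
    exact le_antisymm (key x y hxy.le) (key y x hxy.ge)
  · intro x y
    constructor
    · intro hxy
      intro n hn
      simp only [Finset.mem_image, Set.Finite.mem_toFinset, Set.mem_setOf_eq] at hn ⊢
      obtain ⟨z, hz, rfl⟩ := hn
      exact ⟨z, hz.trans hxy, rfl⟩
    · intro h
      have : f x ∈ (hpf y).toFinset.image f := by
        apply h
        simp only [Finset.mem_image, Set.Finite.mem_toFinset, Set.mem_setOf_eq]
        exact ⟨x, le_refl x, rfl⟩
      simp only [Finset.mem_image, Set.Finite.mem_toFinset, Set.mem_setOf_eq] at this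
      obtain ⟨z, hz, hfz⟩ := this
      exact hf hfz ▸ hz
end

section
/- Let (Q, ≤) be a countable partial order in which every up-set x↑ = {y : y ≥ x} is finite (Q is future-finite). Then there exists an injective map Φ : Q → ℕ such that Φ(x) is odd and Φ(x) ≥ 3 for every x ∈ Q, and for all x, y ∈ Q one has x ≤ y if and only if Φ(y) divides Φ(x). (The divisibility order on odd integers ≥ 3, with n ≤_d m iff m ∣ n, is future-finite-universal.) -/
/-- The divisibility order on odd integers ≥ 3 (with n ≤_d m iff m ∣ n) is
future-finite-universal: every countable partial order with all up-sets
finite embeds into it. -/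
theorem odd_divisibility_future_finite_universal (Q : Type*) [Countable Q] [PartialOrder Q]
    (hff : ∀ x : Q, {y : Q | x ≤ y}.Finite) :
    ∃ Φ : Q → ℕ, Function.Injective Φ ∧
      (∀ x : Q, Odd (Φ x) ∧ 3 ≤ Φ x) ∧
      (∀ x y : Q, x ≤ y ↔ Φ y ∣ Φ x) := by
  obtain ⟨f, hf⟩ := exists_injective_nat Q
  -- p x is the (f x + 1)-th prime, an odd prime ≥ 3, injectively assigned
  set p : Q → ℕ := fun x => Nat.nth Nat.Prime (f x + 1) with hp
  have hpinj : Function.Injective p := by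
    intro a b hab
    have := Nat.nth_injective Nat.infinite_setOf_prime hab
    exact hf (by omega)
  have hpprime : ∀ x, Nat.Prime (p x) := fun x =>
    Nat.nth_mem_of_infinite Nat.infinite_setOf_prime _
  have hp3 : ∀ x, 3 ≤ p x := by
    intro x
    have h2 : Nat.nth Nat.Prime 0 < p x :=
      (Nat.nth_lt_nth Nat.infinite_setOf_prime).2 (by omega)
    have h0 : Nat.nth Nat.Prime 0 = 2 := by
      have hc : Nat.count Nat.Prime 2 = 0 := by
        simp [Nat.count_succ, Nat.not_prime_one, Nat.not_prime_zero]
      have := Nat.nth_count Nat.prime_two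
      rwa [hc] at this
    rw [h0] at h2
    omega
  have hpodd : ∀ x, Odd (p x) :=
    fun x => (hpprime x).odd_of_ne_two (by have := hp3 x; omega)
  set Φ : Q → ℕ := fun x => ∏ z ∈ (hff x).toFinset, p z with hΦ
  have hmem : ∀ x y : Q, y ∈ (hff x).toFinset ↔ x ≤ y := by
    intro x y; simp [Set.Finite.mem_toFinset]
  have hdvd : ∀ x, p x ∣ Φ x := fun x =>
    Finset.dvd_prod_of_mem p ((hmem x x).2 le_rfl)
  have hiff : ∀ x y : Q, x ≤ y ↔ Φ y ∣ Φ x := by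
    intro x y
    constructor
    · intro hxy
      apply Finset.prod_dvd_prod_of_subset _ _ p
      intro z hz
      exact (hmem x z).2 (le_trans hxy ((hmem y z).1 hz))
    · intro hd
      have h1 : p y ∣ Φ x := dvd_trans (hdvd y) hd
      obtain ⟨z, hz, hz2⟩ := (hpprime y).prime.exists_mem_finset_dvd h1
      have : p y = p z := ((Nat.prime_dvd_prime_iff_eq (hpprime y) (hpprime z)).1 hz2)
      rw [hpinj this] at *
      exact (hmem x z).1 hz
  refine ⟨Φ, ?_, ?_, hiff⟩
  · intro a b hab
    exact le_antisymm ((hiff a b).2 (hab ▸ dvd_refl _)) ((hiff b a).2 (hab ▸ dvd_refl _))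
  · intro x
    constructor
    · exact Finset.prod_induction p Odd (fun a b => Odd.mul) odd_one
        (fun z _ => hpodd z)
    · have hpos : 0 < Φ x := Finset.prod_pos fun z _ => (hpprime z).pos
      exact le_trans (hp3 x) (Nat.le_of_dvd hpos (hdvd x))
end

section
/- Let (Q, ≤_Q) be a countable partial order and let e : Q → ℕ be an injection. Define x ≤_f y iff x ≤_Q y and e(x) ≤ e(y), and x ≤_b y iff x ≤_Q y and e(y) ≤ e(x). Then: (1) ≤_f and ≤_b are partial orders on Q; (2) for every x ∈ Q the set {y : y ≤_f x} is finite and the set {y : x ≤_b y} is finite; (3) for all x, y ∈ Q one has x ≤_Q y if and only if there exists w ∈ Q with x ≤_b w and w ≤_f y. (Every countable partial order decomposes into a past-finite forwarding order and a future-finite backwarding order.) -/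
/-- Every countable partial order decomposes into a past-finite forwarding
order `≤_f` and a future-finite backwarding order `≤_b`. -/
theorem forwarding_backwarding_decomposition (Q : Type*) [Countable Q] [PartialOrder Q]
    (e : Q → ℕ) (he : Function.Injective e) :
    IsPartialOrder Q (fun x y => x ≤ y ∧ e x ≤ e y) ∧
    IsPartialOrder Q (fun x y => x ≤ y ∧ e y ≤ e x) ∧
    (∀ x : Q, {y : Q | y ≤ x ∧ e y ≤ e x}.Finite) ∧
    (∀ x : Q, {y : Q | x ≤ y ∧ e y ≤ e x}.Finite) ∧
    (∀ x y : Q, x ≤ y ↔ ∃ w : Q, (x ≤ w ∧ e w ≤ e x) ∧ (w ≤ y ∧ e w ≤ e y)) := by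
  have hfin : ∀ x : Q, {y : Q | e y ≤ e x}.Finite := fun x =>
    (Set.finite_Iic (e x)).preimage he.injOn
  have h1 : IsPartialOrder Q (fun x y => x ≤ y ∧ e x ≤ e y) :=
    { refl := fun a => ⟨le_refl a, le_refl _⟩
      trans := fun a b c h1 h2 => ⟨h1.1.trans h2.1, h1.2.trans h2.2⟩
      antisymm := fun a b h1 h2 => le_antisymm h1.1 h2.1 }
  have h2 : IsPartialOrder Q (fun x y => x ≤ y ∧ e y ≤ e x) :=
    { refl := fun a => ⟨le_refl a, le_refl _⟩
      trans := fun a b c h1 h2 => ⟨h1.1.trans h2.1, h2.2.trans h1.2⟩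
      antisymm := fun a b h1 h2 => le_antisymm h1.1 h2.1 }
  refine ⟨h1, h2, fun x => (hfin x).subset fun y hy => hy.2,
    fun x => (hfin x).subset fun y hy => hy.2,
    fun x y => ⟨fun h => ?_, fun ⟨w, hw1, hw2⟩ => hw1.1.trans hw2.1⟩⟩
  rcases le_total (e x) (e y) with h' | h'
  · exact ⟨x, ⟨le_refl x, le_refl _⟩, h, h'⟩
  · exact ⟨y, ⟨h, h'⟩, le_refl y, le_refl _⟩
end

section
/- For every countable partial order (P, ≤) there exists a family (A_p)_{p ∈ P} of finite sets of odd integers ≥ 3 such that for all p, q ∈ P one has p ≤ q if and only if there exists an arc-preserving map from the disjoint union of directed cycles Σ_{r ∈ A_p} C⃗_r to Σ_{s ∈ A_q} C⃗_s. (The homomorphism order of disjoint unions of directed odd cycles is universal.) -/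
set_option linter.unusedSectionVars false
set_option linter.unusedVariables false

/-- The arc relation of the disjoint union of directed cycles `Σ_{p ∈ A} C⃗_p`:
there is an arc from `(p, i)` to `(p, i+1)` for every `p ∈ A` and `i ∈ ZMod p`. -/
def cyclesRel (A : Finset ℕ) :
    (Σ p : A, ZMod (p : ℕ)) → (Σ p : A, ZMod (p : ℕ)) → Prop :=
  fun x y => ∃ (p : A) (i : ZMod (p : ℕ)), x = ⟨p, i⟩ ∧ y = ⟨p, i + 1⟩

namespace DOC


def sle (A B : Finset (Finset ℕ)) : Prop := ∀ a ∈ A, ∃ b ∈ B, b ⊆ a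

theorem sle_trans {A B C} (h1 : sle A B) (h2 : sle B C) : sle A C := by
  intro a ha
  obtain ⟨b, hb, hba⟩ := h1 a ha
  obtain ⟨c, hc, hcb⟩ := h2 b hb
  exact ⟨c, hc, hcb.trans hba⟩

theorem sle_of_subset {A B} (h : A ⊆ B) : sle A B := fun a ha => ⟨a, h ha, subset_rfl⟩

def binMeet (A B : Finset (Finset ℕ)) : Finset (Finset ℕ) :=
  A.biUnion fun a => B.image (a ∪ ·)

theorem mem_binMeet {A B c} : c ∈ binMeet A B ↔ ∃ a ∈ A, ∃ b ∈ B, c = a ∪ b := by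
  simp only [binMeet, Finset.mem_biUnion, Finset.mem_image]
  constructor
  · rintro ⟨a, ha, b, hb, rfl⟩; exact ⟨a, ha, b, hb, rfl⟩
  · rintro ⟨a, ha, b, hb, rfl⟩; exact ⟨a, ha, b, hb, rfl⟩

def meetAux (g : ℕ → Finset (Finset ℕ)) : ℕ → Finset (Finset ℕ)
  | 0 => {∅}
  | k+1 => binMeet (meetAux g k) (g k)

theorem sle_binMeet {X A B} (h1 : sle X A) (h2 : sle X B) : sle X (binMeet A B) := by
  intro x hx
  obtain ⟨a, ha, hax⟩ := h1 x hx
  obtain ⟨b, hb, hbx⟩ := h2 x hx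
  exact ⟨a ∪ b, mem_binMeet.2 ⟨a, ha, b, hb, rfl⟩, Finset.union_subset hax hbx⟩

theorem binMeet_sle_left {A B} : sle (binMeet A B) A := by
  intro c hc
  obtain ⟨a, ha, b, hb, rfl⟩ := mem_binMeet.1 hc
  exact ⟨a, ha, Finset.subset_union_left⟩

theorem binMeet_sle_right {A B} : sle (binMeet A B) B := by
  intro c hc
  obtain ⟨a, ha, b, hb, rfl⟩ := mem_binMeet.1 hc
  exact ⟨b, hb, Finset.subset_union_right⟩

theorem sle_meetAux {X g k} (h : ∀ m < k, sle X (g m)) : sle X (meetAux g k) := by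
  induction k with
  | zero => exact fun a ha => ⟨∅, by simp [meetAux], Finset.empty_subset a⟩
  | succ k ih =>
      exact sle_binMeet (ih fun m hm => h m (hm.trans (Nat.lt_succ_self k)))
        (h k (Nat.lt_succ_self k))

theorem meetAux_sle {g k m} (hm : m < k) : sle (meetAux g k) (g m) := by
  induction k with
  | zero => omega
  | succ k ih =>
      rcases Nat.lt_succ_iff_lt_or_eq.1 hm with h | rfl
      · exact sle_trans binMeet_sle_left (ih h)
      · exact binMeet_sle_right

theorem mem_meetAux_of_choice {g : ℕ → Finset (Finset ℕ)} {c : ℕ → Finset ℕ} {k : ℕ}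
    (h : ∀ m < k, c m ∈ g m) : (Finset.range k).biUnion c ∈ meetAux g k := by
  induction k with
  | zero => simp [meetAux]
  | succ k ih =>
      have heq : (Finset.range (k+1)).biUnion c = ((Finset.range k).biUnion c) ∪ c k := by
        rw [Finset.range_add_one, Finset.biUnion_insert, Finset.union_comm]
      rw [heq]
      exact mem_binMeet.2 ⟨_, ih (fun m hm => h m (hm.trans (Nat.lt_succ_self k))),
        c k, h k (Nat.lt_succ_self k), rfl⟩

def psi (R : ℕ → ℕ → Prop) [DecidableRel R] (n : ℕ) : Finset (Finset ℕ) :=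
  binMeet
    (insert {n} ((Finset.range n).attach.biUnion fun m =>
      if R m.1 n then psi R m.1 else ∅))
    (meetAux (fun m => if h : m < n then (if R n m then psi R m else {∅}) else {∅}) n)
termination_by n
decreasing_by
  · exact Finset.mem_range.mp m.2
  · exact h

def a0 (R : ℕ → ℕ → Prop) [DecidableRel R] (n : ℕ) : Finset ℕ :=
  insert n ((Finset.range n).attach.biUnion fun m => if R n m.1 then a0 R m.1 else ∅)
termination_by n
decreasing_by
  exact Finset.mem_range.mp m.2

theorem attach_biUnion_eq {α : Type*} [DecidableEq α] (s : Finset ℕ) (f : ℕ → Finset α) :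
    (s.attach.biUnion fun m => f m.1) = s.biUnion f := by
  ext x
  simp [Finset.mem_biUnion, Subtype.exists]

section Poset

variable {P : Type*} [PartialOrder P] (e : P → ℕ)

def Rel : ℕ → ℕ → Prop := fun m n => ∃ p q : P, e p = m ∧ e q = n ∧ p ≤ q

variable [DecidableRel (Rel e)] (he : Function.Injective e)
include he

theorem rel_iff {p q : P} : Rel e (e p) (e q) ↔ p ≤ q := by
  constructor
  · rintro ⟨p', q', hp, hq, hle⟩
    rwa [he hp, he hq] at hle
  · intro h; exact ⟨p, q, rfl, rfl, h⟩

/-- Every member of `psi (e p)` contains `e r` for some `r ≤ p`. -/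
theorem factJ : ∀ N (p : P), e p < N → ∀ a ∈ psi (Rel e) (e p), ∃ r, r ≤ p ∧ e r ∈ a := by
  intro N
  induction N with
  | zero => intro p hp; omega
  | succ N ih =>
      intro p hp a ha
      rw [psi] at ha
      obtain ⟨x, hx, y, hy, rfl⟩ := mem_binMeet.1 ha
      rcases Finset.mem_insert.1 hx with rfl | hx
      · exact ⟨p, le_refl p, by simp⟩
      · obtain ⟨m, hm, hx⟩ := Finset.mem_biUnion.1 hx
        rcases Finset.mem_range.1 m.2 with hmlt
        split_ifs at hx with hR
        · obtain ⟨d, q', hd, hq', hdq⟩ := hR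
          have hq'p : q' = p := he hq'
          subst hq'p
          have hdlt : e d < N := by omega
          obtain ⟨r, hr, hra⟩ := ih d hdlt x (hd ▸ hx)
          exact ⟨r, hr.trans hdq, Finset.mem_union_left _ hra⟩
        · simp at hx

/-- the canonical member `a0 (e p)` belongs to `psi (e p)`. -/
theorem a0_mem : ∀ N (p : P), e p < N → a0 (Rel e) (e p) ∈ psi (Rel e) (e p) := by
  intro N
  induction N with
  | zero => intro p hp; omega
  | succ N ih =>
      intro p hp
      rw [psi, a0]
      apply mem_binMeet.2
      refine ⟨{e p}, Finset.mem_insert_self _ _,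
        (Finset.range (e p)).biUnion (fun m => if Rel e (e p) m then a0 (Rel e) m else ∅),
        ?_, ?_⟩
      · apply mem_meetAux_of_choice
        intro m hm
        rw [dif_pos hm]
        split_ifs with hR
        · obtain ⟨p', u, hp', hu, hpu⟩ := hR
          have : p' = p := he hp'
          subst this
          have : e u < N := by omega
          exact hu ▸ ih u this
        · simp
      · rw [Finset.insert_eq]
        congr 1
        ext x
        simp [Finset.mem_biUnion, Subtype.exists]

/-- characterization of `a0 (e p)` : it is `{e r : p ≤ r, e r ≤ e p}`. -/
theorem a0_spec : ∀ N (p : P), e p < N →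
    ∀ x, x ∈ a0 (Rel e) (e p) ↔ ∃ r, p ≤ r ∧ e r = x ∧ e r ≤ e p := by
  intro N
  induction N with
  | zero => intro p hp; omega
  | succ N ih =>
      intro p hp x
      rw [a0]
      constructor
      · intro hx
        rcases Finset.mem_insert.1 hx with rfl | hx
        · exact ⟨p, le_refl p, rfl, le_refl _⟩
        · obtain ⟨m, hm, hx⟩ := Finset.mem_biUnion.1 hx
          rcases Finset.mem_range.1 m.2 with hmlt
          split_ifs at hx with hR
          · obtain ⟨p', u, hp', hu, hpu⟩ := hR
            have : p' = p := he hp'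
            subst this
            have hult : e u < N := by omega
            obtain ⟨r, hur, hrx, hre⟩ := (ih u hult x).1 (hu ▸ hx)
            exact ⟨r, hpu.trans hur, hrx, by omega⟩
          · simp at hx
      · rintro ⟨r, hpr, rfl, hle⟩
        rcases eq_or_lt_of_le hle with heq | hlt
        · have : r = p := he heq
          subst this
          exact Finset.mem_insert_self _ _
        · apply Finset.mem_insert_of_mem
          apply Finset.mem_biUnion.2
          refine ⟨⟨e r, Finset.mem_range.2 hlt⟩, Finset.mem_attach _ _, ?_⟩
          rw [if_pos (show Rel e (e p) (e r) from ⟨p, r, rfl, rfl, hpr⟩)]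
          have : e r < N := by omega
          exact ((ih r this (e r)).2 ⟨r, le_refl r, rfl, le_refl _⟩)

/-- Forward: p ≤ q implies sle. -/
theorem lemA : ∀ N (p q : P), e p + e q < N → p ≤ q →
    sle (psi (Rel e) (e p)) (psi (Rel e) (e q)) := by
  intro N
  induction N with
  | zero => intro p q h; omega
  | succ N ih =>
      intro p q hN hpq
      rcases lt_trichotomy (e p) (e q) with hlt | heq | hgt
      · -- p strictly earlier: p ∈ D q
        conv_rhs => rw [psi]
        apply sle_binMeet
        · apply sle_of_subset
          apply Finset.Subset.trans ?_ (Finset.subset_insert _ _)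
          apply Finset.Subset.trans ?_
            (Finset.subset_biUnion_of_mem _ (Finset.mem_attach _ ⟨e p, Finset.mem_range.2 hlt⟩))
          rw [if_pos (show Rel e (e p) (e q) from ⟨p, q, rfl, rfl, hpq⟩)]
        · apply sle_meetAux
          intro m hm
          rw [dif_pos hm]
          split_ifs with hR
          · obtain ⟨q', u, hq', hu, hqu⟩ := hR
            have : q' = q := he hq'
            subst this
            have : e p + e u < N := by omega
            exact hu ▸ ih p u this (hpq.trans hqu)
          · exact fun a _ => ⟨∅, by simp, Finset.empty_subset a⟩
      · have : p = q := he heq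
        subst this
        exact fun a ha => ⟨a, ha, subset_rfl⟩
      · -- q strictly earlier: q ∈ U p
        conv_lhs => rw [psi]
        apply sle_trans binMeet_sle_right
        have h1 := meetAux_sle (g := fun m =>
          if h : m < e p then (if Rel e (e p) m then psi (Rel e) m else {∅}) else {∅}) hgt
        apply sle_trans h1
        simp only [dif_pos hgt, if_pos (show Rel e (e p) (e q) from ⟨p, q, rfl, rfl, hpq⟩)]
        exact fun a ha => ⟨a, ha, subset_rfl⟩

/-- Backward: sle implies p ≤ q. -/
theorem lemB (p q : P) (h : sle (psi (Rel e) (e p)) (psi (Rel e) (e q))) : p ≤ q := by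
  obtain ⟨b, hb, hsub⟩ := h _ (a0_mem e he (e p + 1) p (Nat.lt_succ_self _))
  obtain ⟨s, hsq, hes⟩ := factJ e he (e q + 1) q (Nat.lt_succ_self _) b hb
  obtain ⟨r, hpr, hre, _⟩ := (a0_spec e he (e p + 1) p (Nat.lt_succ_self _) (e s)).1 (hsub hes)
  have : r = s := he hre
  subst this
  exact hpr.trans hsq

theorem psi_iff (p q : P) :
    p ≤ q ↔ sle (psi (Rel e) (e p)) (psi (Rel e) (e q)) :=
  ⟨fun h => lemA e he (e p + e q + 1) p q (Nat.lt_succ_self _) h, lemB e he p q⟩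

/-- members of psi are nonempty -/
theorem psi_nonempty (p : P) {a} (ha : a ∈ psi (Rel e) (e p)) : a.Nonempty := by
  obtain ⟨r, _, hra⟩ := factJ e he (e p + 1) p (Nat.lt_succ_self _) a ha
  exact ⟨e r, hra⟩

end Poset


/-- odd primes -/
noncomputable def pr (k : ℕ) : ℕ := Nat.nth Nat.Prime (k + 1)

theorem pr_prime (k : ℕ) : (pr k).Prime :=
  Nat.nth_mem_of_infinite Nat.infinite_setOf_prime (k + 1)

theorem pr_gt_two (k : ℕ) : 2 < pr k := by
  have h0 : Nat.nth Nat.Prime 0 < Nat.nth Nat.Prime (k + 1) :=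
    Nat.nth_strictMono Nat.infinite_setOf_prime (Nat.succ_pos k)
  have h2 : 2 ≤ Nat.nth Nat.Prime 0 :=
    (Nat.nth_mem_of_infinite Nat.infinite_setOf_prime 0).two_le
  exact lt_of_le_of_lt h2 h0

theorem pr_injective : Function.Injective pr := fun a b h =>
  Nat.succ_injective ((Nat.nth_strictMono Nat.infinite_setOf_prime).injective h)

theorem pr_odd (k : ℕ) : Odd (pr k) :=
  (pr_prime k).odd_of_ne_two (by have := pr_gt_two k; omega)

noncomputable def code (S : Finset ℕ) : ℕ := ∏ k ∈ S, pr k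

theorem code_odd (S : Finset ℕ) : Odd (code S) := by
  refine Finset.prod_induction _ Odd (fun a b => Odd.mul) odd_one fun x _ => pr_odd x

theorem code_pos (S : Finset ℕ) : 0 < code S :=
  Finset.prod_pos fun k _ => (pr_prime k).pos

theorem code_three_le {S : Finset ℕ} (hS : S.Nonempty) : 3 ≤ code S := by
  obtain ⟨k, hk⟩ := hS
  have h1 : pr k ∣ code S := Finset.dvd_prod_of_mem _ hk
  have h2 := Nat.le_of_dvd (code_pos S) h1
  have := pr_gt_two k
  omega

theorem code_dvd_iff {T S : Finset ℕ} : code T ∣ code S ↔ T ⊆ S := by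
  constructor
  · intro h k hk
    have h1 : pr k ∣ code S := dvd_trans (Finset.dvd_prod_of_mem _ hk) h
    obtain ⟨j, hj, hdvd⟩ := (pr_prime k).prime.exists_mem_finset_dvd h1
    have : pr k = pr j := ((Nat.prime_dvd_prime_iff_eq (pr_prime k) (pr_prime j)).1 hdvd)
    rwa [pr_injective this]
  · exact fun h => Finset.prod_dvd_prod_of_subset _ _ _ h

section Graph

theorem hom_to_dvd {A B : Finset ℕ} (hB : ∀ b ∈ B, b ≠ 0)
    (F : cyclesRel A →r cyclesRel B) : ∀ a ∈ A, ∃ b ∈ B, b ∣ a := by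
  intro a ha
  set p : A := ⟨a, ha⟩ with hp
  have step : ∀ i : ZMod ((p : ℕ)), F ⟨p, i + 1⟩ = ⟨(F ⟨p, i⟩).1, (F ⟨p, i⟩).2 + 1⟩ := by
    intro i
    have harc : cyclesRel A ⟨p, i⟩ ⟨p, i + 1⟩ := ⟨p, i, rfl, rfl⟩
    obtain ⟨q, j, h1, h2⟩ := F.map_rel harc
    rw [h2, h1]
  have main : ∀ n : ℕ, F ⟨p, ((n : ℕ) : ZMod (p : ℕ))⟩ =
      ⟨(F ⟨p, 0⟩).1, (F ⟨p, 0⟩).2 + (n : ZMod ((F ⟨p, 0⟩).1 : ℕ))⟩ := by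
    intro n
    induction n with
    | zero => simp
    | succ n ih =>
        have hcast : ((n + 1 : ℕ) : ZMod (p : ℕ)) = ((n : ℕ) : ZMod (p : ℕ)) + 1 := by
          push_cast; ring
        rw [hcast, step, ih]
        simp [add_assoc]
  have hself : ((a : ℕ) : ZMod (p : ℕ)) = 0 := by
    exact_mod_cast ZMod.natCast_self a
  have hmain := main a
  rw [hself] at hmain
  have h0 : F ⟨p, 0⟩ = ⟨(F ⟨p, 0⟩).1, (F ⟨p, 0⟩).2⟩ := rfl
  rw [h0] at hmain
  have hsnd : (F ⟨p, 0⟩).2 = (F ⟨p, 0⟩).2 + (a : ZMod ((F ⟨p, 0⟩).1 : ℕ)) := by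
    have := (Sigma.mk.inj_iff.1 hmain).2
    exact eq_of_heq this
  have hzero : ((a : ℕ) : ZMod ((F ⟨p, 0⟩).1 : ℕ)) = 0 := (left_eq_add.1 hsnd)
  haveI : NeZero ((F ⟨p, 0⟩).1 : ℕ) := ⟨hB _ (F ⟨p, 0⟩).1.2⟩
  exact ⟨(F ⟨p, 0⟩).1, (F ⟨p, 0⟩).1.2,
    (ZMod.natCast_eq_zero_iff a _).1 hzero⟩

theorem dvd_to_hom {A B : Finset ℕ} (h : ∀ a ∈ A, ∃ b ∈ B, b ∣ a) :
    Nonempty (cyclesRel A →r cyclesRel B) := by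
  choose f hf hfd using h
  refine ⟨⟨fun x => ⟨⟨f x.1.1 x.1.2, hf x.1.1 x.1.2⟩,
    ZMod.castHom (hfd x.1.1 x.1.2) (ZMod (f x.1.1 x.1.2)) x.2⟩, ?_⟩⟩
  rintro x y ⟨p, i, rfl, rfl⟩
  refine ⟨⟨f p.1 p.2, hf p.1 p.2⟩, ZMod.castHom (hfd p.1 p.2) (ZMod (f p.1 p.2)) i, rfl, ?_⟩
  simp only [map_add, map_one]

end Graph
end DOC

open DOC in
/-- The homomorphism order of disjoint unions of directed odd cycles is
universal: every countable partial order embeds into it. -/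
theorem disjoint_odd_cycles_universal (P : Type*) [Countable P] [PartialOrder P] :
    ∃ A : P → Finset ℕ,
      (∀ p : P, ∀ a ∈ A p, Odd a ∧ 3 ≤ a) ∧
      (∀ p q : P, p ≤ q ↔ Nonempty (cyclesRel (A p) →r cyclesRel (A q))) := by
  classical
  obtain ⟨e, he⟩ := (countable_iff_exists_injective P).1 ‹Countable P›
  refine ⟨fun p => (psi (Rel e) (e p)).image code, ?_, ?_⟩
  · intro p a ha
    obtain ⟨S, hS, rfl⟩ := Finset.mem_image.1 ha
    exact ⟨code_odd S, code_three_le (psi_nonempty e he p hS)⟩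
  · intro p q
    constructor
    · intro hpq
      apply dvd_to_hom
      intro a ha
      obtain ⟨S, hS, rfl⟩ := Finset.mem_image.1 ha
      obtain ⟨T, hT, hTS⟩ := (psi_iff e he p q).1 hpq S hS
      exact ⟨code T, Finset.mem_image_of_mem _ hT, code_dvd_iff.2 hTS⟩
    · rintro ⟨F⟩
      have hB : ∀ b ∈ (psi (Rel e) (e q)).image code, b ≠ 0 := by
        intro b hb
        obtain ⟨T, hT, rfl⟩ := Finset.mem_image.1 hb
        have := code_pos T
        omega
      have hdvd := hom_to_dvd hB F
      apply (psi_iff e he p q).2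
      intro S hS
      obtain ⟨b, hb, hbd⟩ := hdvd (code S) (Finset.mem_image_of_mem _ hS)
      obtain ⟨T, hT, rfl⟩ := Finset.mem_image.1 hb
      exact ⟨T, hT, code_dvd_iff.1 hbd⟩
end

section
/- For every countable partial order (P, ≤) there exists a family (D_p)_{p ∈ P} of finite directed graphs (finite types equipped with a binary relation) such that for all p, q ∈ P one has p ≤ q if and only if there exists a relation-preserving map (RelHom) from D_p to D_q. (The homomorphism order of finite directed graphs is universal.) -/
open Function Finset

namespace DigraphUniversal

noncomputable section
open scoped Classical

variable {P : Type*} [PartialOrder P]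

/-- An injective enumeration of primes. -/
def pr (m : ℕ) : ℕ := Nat.nth Nat.Prime m

lemma pr_prime (m : ℕ) : Nat.Prime (pr m) := Nat.prime_nth_prime m

lemma pr_inj : Function.Injective pr :=
  Nat.nth_injective Nat.infinite_setOf_prime

variable (e : P → ℕ)

/-- `Wd e n t` : the element coded by `n` is below the element coded by `t`. -/
def Wd (n t : ℕ) : Prop := ∃ r s : P, e r = n ∧ e s = t ∧ r ≤ s

/-- The set of prime indices encoding the "profile word" of the element coded `n`. -/
def Fn (n : ℕ) : Finset ℕ :=
  ((range (n + 1)).image (fun t => 2 * t)) ∪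
    (((range (n + 1)).filter (fun t => Wd e n t)).image (fun t => 2 * t + 1))

/-- The cycle length attached to code `n`: a squarefree product of primes. -/
def Kn (n : ℕ) : ℕ := ∏ m ∈ Fn e n, pr m

lemma Kn_pos (n : ℕ) : 0 < Kn e n :=
  Finset.prod_pos fun m _ => (pr_prime m).pos

lemma Kn_dvd_iff (a b : ℕ) : Kn e a ∣ Kn e b ↔ Fn e a ⊆ Fn e b := by
  constructor
  · intro h m hm
    have h1 : pr m ∣ Kn e b := dvd_trans (Finset.dvd_prod_of_mem pr hm) h
    obtain ⟨m', hm', hdvd⟩ := ((pr_prime m).prime.dvd_finset_prod_iff pr).mp h1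
    have : pr m = pr m' :=
      (Nat.prime_dvd_prime_iff_eq (pr_prime m) (pr_prime m')).mp hdvd
    exact pr_inj this ▸ hm'
  · intro h
    exact Finset.prod_dvd_prod_of_subset _ _ pr h

lemma Fn_subset_iff (a b : ℕ) :
    Fn e a ⊆ Fn e b ↔ a ≤ b ∧ ∀ t, t ≤ a → Wd e a t → Wd e b t := by
  constructor
  · intro h
    constructor
    · have h2a : 2 * a ∈ Fn e a :=
        mem_union_left _ (mem_image.mpr ⟨a, mem_range.mpr (by omega), rfl⟩)
      rcases mem_union.mp (h h2a) with h' | h'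
      · obtain ⟨t, ht, h2⟩ := mem_image.mp h'
        have := mem_range.mp ht; omega
      · obtain ⟨t, ht, h2⟩ := mem_image.mp h'
        omega
    · intro t ht hw
      have hmem : 2 * t + 1 ∈ Fn e a :=
        mem_union_right _ (mem_image.mpr
          ⟨t, mem_filter.mpr ⟨mem_range.mpr (by omega), hw⟩, rfl⟩)
      rcases mem_union.mp (h hmem) with h' | h'
      · obtain ⟨t', _, h2⟩ := mem_image.mp h'
        omega
      · obtain ⟨t', ht', h2⟩ := mem_image.mp h'
        have htt : t' = t := by omega
        subst htt
        exact (mem_filter.mp ht').2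
  · rintro ⟨hab, hW⟩ m hm
    rcases mem_union.mp hm with h' | h'
    · obtain ⟨t, ht, rfl⟩ := mem_image.mp h'
      have := mem_range.mp ht
      exact mem_union_left _ (mem_image.mpr ⟨t, mem_range.mpr (by omega), rfl⟩)
    · obtain ⟨t, ht, rfl⟩ := mem_image.mp h'
      obtain ⟨htr, htw⟩ := mem_filter.mp ht
      have := mem_range.mp htr
      exact mem_union_right _ (mem_image.mpr
        ⟨t, mem_filter.mpr ⟨mem_range.mpr (by omega), hW t (by omega) htw⟩, rfl⟩)

/-- Dominance condition: every profile of an element below `p` (with small code)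
is divisible by a profile of an element below `q` (with small code). -/
def Good (p q : P) : Prop :=
  ∀ n, ((∃ r, e r = n ∧ r ≤ p) ∧ n ≤ e p) →
    ∃ n', ((∃ r', e r' = n' ∧ r' ≤ q) ∧ n' ≤ e q) ∧ Fn e n' ⊆ Fn e n

lemma le_iff_good (he : Function.Injective e) (p q : P) : p ≤ q ↔ Good e p q := by
  constructor
  · rintro hpq n ⟨⟨r, hrn, hrp⟩, hnp⟩
    by_cases hc : n ≤ e q
    · exact ⟨n, ⟨⟨r, hrn, hrp.trans hpq⟩, hc⟩, subset_rfl⟩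
    · refine ⟨e q, ⟨⟨q, rfl, le_refl q⟩, le_refl _⟩, ?_⟩
      rw [Fn_subset_iff]
      refine ⟨by omega, ?_⟩
      rintro t ht ⟨r1, s, hr1, hs, hrs⟩
      have hq : r1 = q := he hr1
      exact ⟨r, s, hrn, hs, hrp.trans (hpq.trans (hq ▸ hrs))⟩
  · intro hG
    obtain ⟨n', ⟨⟨r', hr', hr'q⟩, _⟩, hsub⟩ :=
      hG (e p) ⟨⟨p, rfl, le_refl p⟩, le_refl _⟩
    rw [Fn_subset_iff] at hsub
    obtain ⟨hle, hW⟩ := hsub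
    obtain ⟨r2, s2, hr2, hs2, h22⟩ :=
      hW n' (le_refl n') ⟨r', r', hr', hr', le_refl r'⟩
    have h2p : r2 = p := he hr2
    have hs2' : s2 = r' := he (by rw [hs2, hr'])
    calc p = r2 := h2p.symm
      _ ≤ s2 := h22
      _ = r' := hs2'
      _ ≤ q := hr'q

/-- Index type for the components of the digraph of `p`. -/
def Idx (p : P) : Type := {n : ℕ // (∃ r, e r = n ∧ r ≤ p) ∧ n ≤ e p}

/-- The vertex type: disjoint union of cycles. -/
def Vx (p : P) : Type := Σ n : Idx e p, ZMod (Kn e n.1)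

/-- The successor map on each cycle. -/
def succV (p : P) : Vx e p → Vx e p := fun x => ⟨x.1, x.2 + 1⟩

/-- The arc relation of the digraph of `p`. -/
def Ed (p : P) : Vx e p → Vx e p → Prop := fun a b => b = succV e p a

def fintypeIdx (p : P) : Fintype (Idx e p) :=
  Fintype.ofInjective (fun x : Idx e p => (⟨x.1, Nat.lt_succ_of_le x.2.2⟩ : Fin (e p + 1)))
    (fun a b h => Subtype.ext (by simpa using congrArg Fin.val h))

def fintypeVx (p : P) : Fintype (Vx e p) := by
  haveI := fintypeIdx e p
  haveI : ∀ n : Idx e p, NeZero (Kn e n.1) := fun n => ⟨(Kn_pos e n.1).ne'⟩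
  exact Sigma.instFintype

lemma succV_iter (p : P) (k : ℕ) (n : Idx e p) (v : ZMod (Kn e n.1)) :
    (succV e p)^[k] ⟨n, v⟩ = ⟨n, v + (k : ZMod (Kn e n.1))⟩ := by
  induction k with
  | zero => simp; rfl
  | succ k ih =>
    refine (Function.iterate_succ_apply' (succV e p) k ⟨n, v⟩).trans ?_
    rw [ih]
    show (⟨n, (v + (k : ZMod (Kn e n.1))) + 1⟩ : Vx e p) = _
    exact congrArg (Sigma.mk n) (by push_cast; ring)

lemma hom_of_good (p q : P) (hG : Good e p q) : Nonempty (Ed e p →r Ed e q) := by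
  choose g hg1 hg2 using hG
  refine ⟨⟨fun x => ⟨⟨g x.1.1 x.1.2, hg1 x.1.1 x.1.2⟩,
    ZMod.castHom ((Kn_dvd_iff e _ _).mpr (hg2 x.1.1 x.1.2)) _ x.2⟩, ?_⟩⟩
  rintro ⟨n, v⟩ b hab
  have hb : b = (⟨n, v + 1⟩ : Vx e p) := hab
  subst hb
  exact congrArg (Sigma.mk _) (by rw [map_add, map_one])

lemma good_of_hom (p q : P) (hne : Nonempty (Ed e p →r Ed e q)) : Good e p q := by
  obtain ⟨f⟩ := hne
  intro n hn
  have key : ∀ x : Vx e p, f (succV e p x) = succV e q (f x) :=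
    fun x => f.map_rel (a := x) (b := succV e p x) rfl
  have iterf : ∀ (k : ℕ) (x : Vx e p), f ((succV e p)^[k] x) = (succV e q)^[k] (f x) := by
    intro k
    induction k with
    | zero => intro x; simp
    | succ k ih =>
      intro x
      rw [Function.iterate_succ_apply', Function.iterate_succ_apply', key, ih]
  set a0 : Vx e p := ⟨⟨n, hn⟩, 0⟩ with ha0
  set c : ℕ := Kn e n with hc
  have h0 : (succV e p)^[c] a0 = a0 := by
    rw [ha0]; refine (succV_iter e p c ⟨n, hn⟩ 0).trans ?_
    exact congrArg (Sigma.mk _) (by rw [hc, ZMod.natCast_self, add_zero])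
  rcases hfa : f a0 with ⟨m, y⟩
  have hbig : (⟨m, y⟩ : Vx e q) = ⟨m, y + (c : ZMod (Kn e m.1))⟩ := by
    calc (id ⟨m, y⟩ : Vx e q) = f a0 := hfa.symm
      _ = f ((succV e p)^[c] a0) := by rw [h0]
      _ = (succV e q)^[c] (f a0) := iterf c a0
      _ = (succV e q)^[c] ⟨m, y⟩ := by rw [hfa]
      _ = (id ⟨m, y + (c : ZMod (Kn e m.1))⟩ : Vx e q) := succV_iter e q c m y
  have hyy : y = y + (c : ZMod (Kn e m.1)) := by
    have := (Sigma.mk.inj_iff.mp hbig).2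
    exact eq_of_heq this
  have hc0 : (c : ZMod (Kn e m.1)) = 0 := (left_eq_add.mp hyy)
  have hdvd : Kn e m.1 ∣ c := (ZMod.natCast_eq_zero_iff c (Kn e m.1)).mp hc0
  exact ⟨m.1, m.2, (Kn_dvd_iff e _ _).mp (hc ▸ hdvd)⟩

end
end DigraphUniversal

/-- The homomorphism order of finite directed graphs is universal: every
countable partial order embeds into it. -/
theorem digraph_hom_order_universal (P : Type*) [Countable P] [PartialOrder P] :
    ∃ (V : P → Type) (_ : ∀ p, Fintype (V p)) (E : ∀ p, V p → V p → Prop),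
      ∀ p q : P, p ≤ q ↔ Nonempty (E p →r E q) := by
  obtain ⟨e, he⟩ := Countable.exists_injective_nat P
  refine ⟨DigraphUniversal.Vx e, fun p => DigraphUniversal.fintypeVx e p,
    DigraphUniversal.Ed e, fun p q => ?_⟩
  rw [DigraphUniversal.le_iff_good e he p q]
  exact ⟨DigraphUniversal.hom_of_good e p q, DigraphUniversal.good_of_hom e p q⟩
end
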